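/- Fix a real parameter g with −2 < g < 2 and set h = √(1 − g²/4), G = g/h. Then for every (b₀,q₀) with q₀ > 0, the function q ↦ f(b₀,q) is differentiable at q₀ with derivative ∂f/∂q = h·b₀ / B(b₀,q₀). -/

import Mathlib

noncomputable def finsH (g : ℝ) : ℝ := Real.sqrt (1 - g ^ 2 / 4)

noncomputable def finsG (g : ℝ) : ℝ := g / finsH g

/-- The characteristic quadratic form `B(b,q) = b² + g·q·b + q²`. -/
noncomputable def finsB (g b q : ℝ) : ℝ := b ^ 2 + g * q * b + q ^ 2

/-- `L(b,q) = q + (g/2)·b`. -/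
noncomputable def finsL (g b q : ℝ) : ℝ := q + (g / 2) * b

/-- The piecewise-defined Finsleroid function `f` on the half-plane `q > 0`. -/
noncomputable def finsF (g b q : ℝ) : ℝ :=
  if 0 < b then -Real.arctan (finsG g / 2) + Real.arctan (finsL g b q / (finsH g * b))
  else if b < 0 then
    Real.pi - Real.arctan (finsG g / 2) + Real.arctan (finsL g b q / (finsH g * b))
  else Real.pi / 2 - Real.arctan (finsG g / 2)

/-- The Finsleroid-regular metric function `K(b,q) = √(B(b,q))·exp(−(G/2)·f(b,q))`. -/
noncomputable def finsK (g b q : ℝ) : ℝ :=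
  Real.sqrt (finsB g b q) * Real.exp (-(finsG g / 2) * finsF g b q)

lemma finsH_pos (g : ℝ) (hg1 : -2 < g) (hg2 : g < 2) : 0 < finsH g := by
  apply Real.sqrt_pos.mpr
  nlinarith

lemma finsH_sq (g : ℝ) (hg1 : -2 < g) (hg2 : g < 2) :
    finsH g ^ 2 = 1 - g ^ 2 / 4 := by
  rw [finsH, Real.sq_sqrt]; nlinarith

lemma fins_arctan_deriv (g : ℝ) (hg1 : -2 < g) (hg2 : g < 2)
    (b₀ q₀ : ℝ) (hb : b₀ ≠ 0) :
    HasDerivAt (fun q : ℝ => Real.arctan (finsL g b₀ q / (finsH g * b₀)))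
      (finsH g * b₀ / finsB g b₀ q₀) q₀ := by
  have hH := finsH_pos g hg1 hg2
  have hHb : finsH g * b₀ ≠ 0 := mul_ne_zero (ne_of_gt hH) hb
  have h1 : HasDerivAt (fun q : ℝ => finsL g b₀ q / (finsH g * b₀))
      (1 / (finsH g * b₀)) q₀ := by
    have : HasDerivAt (fun q : ℝ => finsL g b₀ q) 1 q₀ := by
      simpa [finsL] using (hasDerivAt_id q₀).add_const ((g / 2) * b₀)
    simpa using this.div_const (finsH g * b₀)
  have h2 := (Real.hasDerivAt_arctan (finsL g b₀ q₀ / (finsH g * b₀))).comp q₀ h1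
  refine h2.congr_deriv (Eq.symm ?_)
  have hB : finsB g b₀ q₀ = (finsH g * b₀) ^ 2 + finsL g b₀ q₀ ^ 2 := by
    have := finsH_sq g hg1 hg2
    simp only [finsB, finsL]
    nlinarith [this]
  have hBpos : 0 < finsB g b₀ q₀ := by
    rw [hB]
    have : 0 < (finsH g * b₀) ^ 2 := by positivity
    nlinarith [sq_nonneg (finsL g b₀ q₀)]
  field_simp
  rw [hB]
  ring

/-- for `q₀ > 0`, the function `q ↦ f(b₀,q)` is differentiable at
`q₀` with derivative `∂f/∂q = h·b₀ / B(b₀,q₀)`. -/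
theorem finsleroid_f_deriv_q (g : ℝ) (hg1 : -2 < g) (hg2 : g < 2)
    (b₀ q₀ : ℝ) (hq : 0 < q₀) :
    HasDerivAt (fun q : ℝ => finsF g b₀ q)
      (finsH g * b₀ / finsB g b₀ q₀) q₀ := by
  rcases lt_trichotomy b₀ 0 with hb | hb | hb
  · have h := (fins_arctan_deriv g hg1 hg2 b₀ q₀ (ne_of_lt hb)).const_add
      (Real.pi - Real.arctan (finsG g / 2))
    simpa [finsF, hb, not_lt.mpr hb.le] using h
  · subst hb
    have hBpos : 0 < finsB g 0 q₀ := by simp [finsB]; positivity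
    have : finsH g * 0 / finsB g 0 q₀ = 0 := by simp
    rw [this]
    simpa [finsF] using hasDerivAt_const q₀ (Real.pi / 2 - Real.arctan (finsG g / 2))
  · have h := (fins_arctan_deriv g hg1 hg2 b₀ q₀ (ne_of_gt hb)).const_add
      (-Real.arctan (finsG g / 2))
    simpa [finsF, hb] using h
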